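/- For the simultaneously constructed sequences T and O_T of the previous construction, if the density of 1's in T exists, then neither T nor O_T is eventually periodic, since their letter densities (1 + √17)/8 and (7 − √17)/4 are irrational. -/

import Mathlib

/-- One step of the simultaneous construction (Program 2): if the current
(0-indexed) `i`-th letter of `O` is 2 the corresponding block is filled with
1,1; otherwise it is a block of size 1 filled with the alternating digit `d`. -/
def simStep : List ℕ × List ℕ × ℕ → ℕ → List ℕ × List ℕ × ℕ
  | (t, o, d), i =>
    if o.getD i 0 = 2 then (t ++ [1], o ++ [1, 1], d)
    else (t ++ [d], o ++ [d], 3 - d)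

/-- State (T, O, next alternating digit) after `n` loop iterations, starting
from T = (2), O = 2,2, d = 1. -/
def simState : ℕ → List ℕ × List ℕ × ℕ
  | 0 => ([2], [2, 2], 1)
  | n + 1 => simStep (simState n) (n + 1)

/-- The n-th letter (1-indexed) of the directing sequence T of the
simultaneous construction. -/
def simT (n : ℕ) : ℕ := (simState n).1.getD (n - 1) 0

/-- The n-th letter (1-indexed) of the directed sequence O_T of the
simultaneous construction. -/
def simO (n : ℕ) : ℕ := (simState n).2.1.getD (n - 1) 0

/-- Frequency of 1's among the first n letters of f (read at indices 1,…,n). -/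
noncomputable def freqOnes (f : ℕ → ℕ) (n : ℕ) : ℝ :=
  ((Finset.Icc 1 n).filter (fun k => f k = 1)).card / n

lemma simStep_cases (s : List ℕ × List ℕ × ℕ) (i : ℕ) :
    simStep s i = if s.2.1.getD i 0 = 2 then (s.1 ++ [1], s.2.1 ++ [1, 1], s.2.2)
      else (s.1 ++ [s.2.2], s.2.1 ++ [s.2.2], 3 - s.2.2) := by
  obtain ⟨t, o, d⟩ := s; rfl

lemma t_len (n : ℕ) : (simState n).1.length = n + 1 := by
  induction n with
  | zero => rfl
  | succ n ih =>
    rw [simState, simStep_cases]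
    split <;> simp [ih]

lemma o_len_ge (n : ℕ) : n + 2 ≤ (simState n).2.1.length := by
  induction n with
  | zero => simp [simState]
  | succ n ih =>
    rw [simState, simStep_cases]
    split <;> simp <;> omega

lemma t_prefix_succ (n : ℕ) : (simState n).1 <+: (simState (n + 1)).1 := by
  rw [simState, simStep_cases]; split <;> simp

lemma o_prefix_succ (n : ℕ) : (simState n).2.1 <+: (simState (n + 1)).2.1 := by
  rw [simState, simStep_cases]; split <;> simp

lemma t_prefix {n m : ℕ} (h : n ≤ m) : (simState n).1 <+: (simState m).1 := by
  induction m with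
  | zero => simp_all
  | succ m ih =>
    rcases Nat.eq_or_lt_of_le h with rfl | h
    · exact List.prefix_refl _
    · exact (ih (by omega)).trans (t_prefix_succ m)

lemma o_prefix {n m : ℕ} (h : n ≤ m) : (simState n).2.1 <+: (simState m).2.1 := by
  induction m with
  | zero => simp_all
  | succ m ih =>
    rcases Nat.eq_or_lt_of_le h with rfl | h
    · exact List.prefix_refl _
    · exact (ih (by omega)).trans (o_prefix_succ m)

lemma getD_of_prefix {l₁ l₂ : List ℕ} (h : l₁ <+: l₂) {i : ℕ} (hi : i < l₁.length) :
    l₂.getD i 0 = l₁.getD i 0 := by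
  obtain ⟨t, rfl⟩ := h
  rw [List.getD_eq_getElem?_getD, List.getD_eq_getElem?_getD,
    List.getElem?_append_left hi]

lemma simT_eq (n i : ℕ) (h1 : 1 ≤ i) (h2 : i ≤ n + 1) :
    simT i = (simState n).1.getD (i - 1) 0 := by
  rcases le_total i n with h | h
  · exact (getD_of_prefix (t_prefix h) (by rw [t_len]; omega)).symm
  · have : i - 1 < (simState n).1.length := by rw [t_len]; omega
    unfold simT
    exact (getD_of_prefix (t_prefix (show n ≤ i by omega)) this)

lemma simO_eq (n i : ℕ) (h1 : 1 ≤ i) (h2 : i ≤ (simState n).2.1.length) :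
    simO i = (simState n).2.1.getD (i - 1) 0 := by
  rcases le_total i n with h | h
  · have : i - 1 < (simState i).2.1.length := by have := o_len_ge i; omega
    exact (getD_of_prefix (o_prefix h) this).symm
  · have : i - 1 < (simState n).2.1.length := by omega
    unfold simO
    exact getD_of_prefix (o_prefix (show n ≤ i by omega)) this

/-- The value read at step n+1 is simO (n+2). -/
lemma read_eq (n : ℕ) : (simState n).2.1.getD (n + 1) 0 = simO (n + 2) := by
  have h := simO_eq n (n + 2) (by omega) (o_len_ge n)
  simpa using h.symm

lemma step_two (n : ℕ) (h : simO (n + 2) = 2) :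
    simState (n + 1) = ((simState n).1 ++ [1], (simState n).2.1 ++ [1, 1], (simState n).2.2) := by
  rw [simState, simStep_cases, read_eq, h]; simp

lemma step_one (n : ℕ) (h : simO (n + 2) ≠ 2) :
    simState (n + 1) = ((simState n).1 ++ [(simState n).2.2],
      (simState n).2.1 ++ [(simState n).2.2], 3 - (simState n).2.2) := by
  rw [simState, simStep_cases, read_eq]
  simp [h]

lemma getD_append_len (l : List ℕ) (x : ℕ) (xs : List ℕ) :
    (l ++ (x :: xs)).getD l.length 0 = x := by
  rw [List.getD_eq_getElem?_getD, List.getElem?_append_right (le_refl _)]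
  simp

/-- Letters of o and the digit d are in {1,2}. -/
lemma letters_mem (n : ℕ) : (∀ x ∈ (simState n).2.1, x = 1 ∨ x = 2) ∧
    ((simState n).2.2 = 1 ∨ (simState n).2.2 = 2) := by
  induction n with
  | zero => simp [simState]
  | succ n ih =>
    rw [simState, simStep_cases]
    rcases ih with ⟨h1, h2⟩
    rcases h2 with h2 | h2 <;> rw [h2] <;> split <;>
      refine ⟨?_, by norm_num⟩ <;> intro x hx <;>
      rcases List.mem_append.1 hx with h | h <;>
      first
        | exact h1 x h
        | (simp at h; omega)

lemma simO_mem (i : ℕ) (h : 1 ≤ i) : simO i = 1 ∨ simO i = 2 := by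
  have hlen : i - 1 < (simState i).2.1.length := by have := o_len_ge i; omega
  have : simO i = (simState i).2.1.getD (i - 1) 0 := rfl
  rw [this, List.getD_eq_getElem?_getD, List.getElem?_eq_getElem hlen]
  exact (letters_mem i).1 _ (List.getElem_mem hlen)

/-- simT (n+2) in terms of the step taken. -/
lemma simT_step_two (n : ℕ) (h : simO (n + 2) = 2) : simT (n + 2) = 1 := by
  rw [simT_eq (n + 1) (n + 2) (by omega) (by omega), step_two n h]
  have h2 := getD_append_len (simState n).1 1 []
  rw [t_len] at h2
  exact h2

lemma simT_step_one (n : ℕ) (h : simO (n + 2) ≠ 2) :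
    simT (n + 2) = (simState n).2.2 := by
  rw [simT_eq (n + 1) (n + 2) (by omega) (by omega), step_one n h]
  have h2 := getD_append_len (simState n).1 (simState n).2.2 []
  rw [t_len] at h2
  exact h2

lemma D_step_two (n : ℕ) (h : simO (n + 2) = 2) :
    (simState (n + 1)).2.2 = (simState n).2.2 := by rw [step_two n h]

lemma D_step_one (n : ℕ) (h : simO (n + 2) ≠ 2) :
    (simState (n + 1)).2.2 = 3 - (simState n).2.2 := by rw [step_one n h]

lemma getD_append_len1 (l : List ℕ) (x y : ℕ) :
    (l ++ [x, y]).getD (l.length + 1) 0 = y := by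
  have : l ++ [x, y] = (l ++ [x]) ++ [y] := by simp
  rw [this]
  have := getD_append_len (l ++ [x]) y []
  simpa using this

lemma simO_new_two (n : ℕ) (h : simO (n + 2) = 2) :
    simO ((simState n).2.1.length + 1) = 1 ∧ simO ((simState n).2.1.length + 2) = 1 := by
  have hl : (simState (n+1)).2.1.length = (simState n).2.1.length + 2 := by
    rw [step_two n h]; simp
  constructor
  · rw [simO_eq (n+1) _ (by omega) (by omega), step_two n h]
    have := getD_append_len (simState n).2.1 1 [1]
    simpa using this
  · rw [simO_eq (n+1) _ (by omega) (by omega), step_two n h]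
    have := getD_append_len1 (simState n).2.1 1 1
    simpa using this

lemma simO_new_one (n : ℕ) (h : simO (n + 2) ≠ 2) :
    simO ((simState n).2.1.length + 1) = (simState n).2.2 := by
  have hl : (simState (n+1)).2.1.length = (simState n).2.1.length + 1 := by
    rw [step_one n h]; simp
  rw [simO_eq (n+1) _ (by omega) (by omega), step_one n h]
  have := getD_append_len (simState n).2.1 (simState n).2.2 []
  simpa using this

lemma Icc_succ_right' (a b : ℕ) (h : a ≤ b + 1) :
    Finset.Icc a (b + 1) = insert (b + 1) (Finset.Icc a b) := by
  ext i
  simp only [Finset.mem_Icc, Finset.mem_insert]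
  omega

/-- number of indices i ∈ [1,m] with f i = a -/
def cnt (f : ℕ → ℕ) (a m : ℕ) : ℕ := ((Finset.Icc 1 m).filter (fun i => f i = a)).card

lemma cnt_succ (f : ℕ → ℕ) (a m : ℕ) :
    cnt f a (m + 1) = cnt f a m + if f (m + 1) = a then 1 else 0 := by
  unfold cnt
  rw [Icc_succ_right' _ _ (by omega), Finset.filter_insert]
  split
  · rw [Finset.card_insert_of_notMem (by simp)]
  · simp

/-- number of alternation steps among indices 2..n+1 -/
def wcnt (n : ℕ) : ℕ := ((Finset.Icc 2 (n + 1)).filter (fun i => simO i = 1)).card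
def vcnt (n : ℕ) : ℕ :=
  ((Finset.Icc 2 (n + 1)).filter (fun i => simO i = 1 ∧ simT i = 2)).card

lemma wcnt_succ (n : ℕ) :
    wcnt (n + 1) = wcnt n + if simO (n + 2) = 1 then 1 else 0 := by
  unfold wcnt
  rw [show n + 1 + 1 = (n + 1) + 1 from rfl, Icc_succ_right' _ _ (by omega),
    Finset.filter_insert]
  split
  · rw [Finset.card_insert_of_notMem (by simp)]
  · simp

lemma vcnt_succ (n : ℕ) :
    vcnt (n + 1) = vcnt n + if simO (n + 2) = 1 ∧ simT (n + 2) = 2 then 1 else 0 := by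
  unfold vcnt
  rw [show n + 1 + 1 = (n + 1) + 1 from rfl, Icc_succ_right' _ _ (by omega),
    Finset.filter_insert]
  split
  · rw [Finset.card_insert_of_notMem (by simp)]
  · simp

lemma invariant (n : ℕ) :
    (simState n).2.1.length = n + 1 + cnt simO 2 (n + 1) ∧
    cnt simO 2 ((simState n).2.1.length) = 2 + vcnt n ∧
    (((simState n).2.2 = 1 ∧ wcnt n = 2 * vcnt n) ∨
     ((simState n).2.2 = 2 ∧ wcnt n = 2 * vcnt n + 1)) ∧
    cnt simT 1 (n + 1) + 1 + vcnt n = cnt simO 2 (n + 1) + wcnt n ∧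
    wcnt n + cnt simO 2 (n + 1) = n + 1 := by
  induction n with
  | zero =>
    have h1 : cnt simO 2 1 = 1 := by decide
    have h2 : cnt simO 2 2 = 2 := by decide
    have h3 : cnt simT 1 1 = 0 := by decide
    have h4 : wcnt 0 = 0 := by decide
    have h5 : vcnt 0 = 0 := by decide
    refine ⟨?_, ?_, ?_, ?_, ?_⟩ <;> simp [simState, h1, h2, h3, h4, h5]
  | succ n ih =>
    obtain ⟨ih1, ih2, ih3, ih4, ih5⟩ := ih
    simp only [show n + 1 + 1 = n + 2 from rfl]
    rcases simO_mem (n + 2) (by omega) with hO | hO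
    · -- O (n+2) = 1 : size-1 block with digit d
      have hO2 : simO (n + 2) ≠ 2 := by omega
      have hb : cnt simO 2 (n + 2) = cnt simO 2 (n + 1) := by
        rw [cnt_succ]; simp [hO2]
      have hl : (simState (n + 1)).2.1.length = (simState n).2.1.length + 1 := by
        rw [step_one n hO2]; simp
      have hw : wcnt (n + 1) = wcnt n + 1 := by rw [wcnt_succ]; simp [hO]
      have hT : simT (n + 2) = (simState n).2.2 := simT_step_one n hO2
      have hnew : simO ((simState n).2.1.length + 1) = (simState n).2.2 :=
        simO_new_one n hO2
      have hD : (simState (n + 1)).2.2 = 3 - (simState n).2.2 := D_step_one n hO2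
      rcases ih3 with ⟨hd, hwv⟩ | ⟨hd, hwv⟩
      · -- d = 1 : T (n+2) = 1
        have hv : vcnt (n + 1) = vcnt n := by
          rw [vcnt_succ]; simp [hT, hd]
        have hu : cnt simT 1 (n + 2) = cnt simT 1 (n + 1) + 1 := by
          rw [cnt_succ]; simp [hT, hd]
        have hcl : cnt simO 2 ((simState n).2.1.length + 1) =
            cnt simO 2 ((simState n).2.1.length) := by
          rw [cnt_succ]; simp [hnew, hd]
        refine ⟨by omega, by rw [hl, hcl]; omega, ?_, by omega, by omega⟩
        right
        constructor
        · rw [hD, hd]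
        · omega
      · -- d = 2 : T (n+2) = 2
        have hv : vcnt (n + 1) = vcnt n + 1 := by
          rw [vcnt_succ]; simp [hT, hd, hO]
        have hu : cnt simT 1 (n + 2) = cnt simT 1 (n + 1) := by
          rw [cnt_succ]; simp [hT, hd]
        have hcl : cnt simO 2 ((simState n).2.1.length + 1) =
            cnt simO 2 ((simState n).2.1.length) + 1 := by
          rw [cnt_succ]; simp [hnew, hd]
        refine ⟨by omega, by rw [hl, hcl]; omega, ?_, by omega, by omega⟩
        left
        constructor
        · rw [hD, hd]
        · omega
    · -- O (n+2) = 2 : block 1,1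
      have hb : cnt simO 2 (n + 2) = cnt simO 2 (n + 1) + 1 := by
        rw [cnt_succ]; simp [hO]
      have hl : (simState (n + 1)).2.1.length = (simState n).2.1.length + 2 := by
        rw [step_two n hO]; simp
      have hw : wcnt (n + 1) = wcnt n := by rw [wcnt_succ]; simp [hO]
      have hv : vcnt (n + 1) = vcnt n := by rw [vcnt_succ]; simp [hO]
      have hT : simT (n + 2) = 1 := simT_step_two n hO
      have hu : cnt simT 1 (n + 2) = cnt simT 1 (n + 1) + 1 := by
        rw [cnt_succ]; simp [hT]
      obtain ⟨hn1, hn2⟩ := simO_new_two n hO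
      have hcl : cnt simO 2 ((simState n).2.1.length + 2) =
          cnt simO 2 ((simState n).2.1.length) := by
        rw [show (simState n).2.1.length + 2 = ((simState n).2.1.length + 1) + 1 from rfl,
          cnt_succ, cnt_succ]
        simp [hn1, hn2]
      have hD : (simState (n + 1)).2.2 = (simState n).2.2 := D_step_two n hO
      refine ⟨by omega, by rw [hl, hcl]; omega, ?_, by omega, by omega⟩
      rw [hD, hw, hv]
      exact ih3

/-- Key identity A: 2 b(m + b m) + b m + e = m + 4 with e ≤ 1. -/
lemma keyA (m : ℕ) (hm : 1 ≤ m) :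
    ∃ e ≤ 1, 2 * cnt simO 2 (m + cnt simO 2 m) + cnt simO 2 m + e = m + 4 := by
  obtain ⟨ih1, ih2, ih3, ih4, ih5⟩ := invariant (m - 1)
  rw [show m - 1 + 1 = m from by omega] at ih1 ih4 ih5
  rw [ih1] at ih2
  rcases ih3 with ⟨_, hwv⟩ | ⟨_, hwv⟩
  · exact ⟨0, by omega, by omega⟩
  · exact ⟨1, by omega, by omega⟩

/-- Key identity B: 2 u m + 2 = b m + m + e with e ≤ 1. -/
lemma keyB (m : ℕ) (hm : 1 ≤ m) :
    ∃ e ≤ 1, 2 * cnt simT 1 m + 2 = cnt simO 2 m + m + e := by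
  obtain ⟨ih1, ih2, ih3, ih4, ih5⟩ := invariant (m - 1)
  rw [show m - 1 + 1 = m from by omega] at ih1 ih4 ih5
  rcases ih3 with ⟨_, hwv⟩ | ⟨_, hwv⟩
  · exact ⟨0, by omega, by omega⟩
  · exact ⟨1, by omega, by omega⟩

lemma cnt_le (f : ℕ → ℕ) (a m : ℕ) : cnt f a m ≤ m := by
  calc cnt f a m ≤ (Finset.Icc 1 m).card := Finset.card_filter_le _ _
  _ = m := by rw [Nat.card_Icc]; omega

open Filter


open Filter

lemma tendsto_b (dT : ℝ)
    (hdT : Tendsto (fun m => (cnt simT 1 m : ℝ) / m) atTop (nhds dT)) :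
    Tendsto (fun m => (cnt simO 2 m : ℝ) / m) atTop (nhds (2 * dT - 1)) := by
  have hdiff : Tendsto
      (fun m => (cnt simO 2 m : ℝ) / m - (2 * (cnt simT 1 m : ℝ) / m - 1)) atTop (nhds 0) := by
    apply squeeze_zero_norm' ?_ (tendsto_const_div_atTop_nhds_zero_nat 2)
    filter_upwards [eventually_ge_atTop 1] with m hm
    obtain ⟨e, he, hid⟩ := keyB m hm
    have hm0 : (0 : ℝ) < (m : ℝ) := by exact_mod_cast hm
    have hcast : 2 * (cnt simT 1 m : ℝ) + 2 = (cnt simO 2 m : ℝ) + m + e := by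
      exact_mod_cast hid
    have he' : (e : ℝ) ≤ 1 := by exact_mod_cast he
    have he0 : (0 : ℝ) ≤ e := by positivity
    have key : (cnt simO 2 m : ℝ) / m - (2 * (cnt simT 1 m : ℝ) / m - 1) = (2 - e) / m := by
      field_simp
      linarith
    rw [key, Real.norm_eq_abs, abs_of_nonneg (div_nonneg (by linarith) hm0.le)]
    gcongr
    linarith
  have h2 : Tendsto (fun m => 2 * (cnt simT 1 m : ℝ) / m - 1) atTop (nhds (2 * dT - 1)) := by
    have := (hdT.const_mul 2).sub_const 1
    simpa [mul_div_assoc] using this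
  have := hdiff.add h2
  simpa using this

lemma beta_quadratic (dT : ℝ)
    (hdT : Tendsto (fun m => (cnt simT 1 m : ℝ) / m) atTop (nhds dT)) :
    2 * (2 * dT - 1) ^ 2 + 3 * (2 * dT - 1) - 1 = 0 := by
  set β := 2 * dT - 1 with hβ
  have hb := tendsto_b dT hdT
  set g : ℕ → ℕ := fun m => m + cnt simO 2 m with hg
  have hgtop : Tendsto g atTop atTop :=
    tendsto_atTop_mono (fun m => by simp [hg]) tendsto_id
  have h1 : Tendsto (fun m => (cnt simO 2 (g m) : ℝ) / (g m)) atTop (nhds β) := hb.comp hgtop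
  have h2 : Tendsto (fun m => ((g m : ℕ) : ℝ) / m) atTop (nhds (1 + β)) := by
    have : Tendsto (fun m => 1 + (cnt simO 2 m : ℝ) / m) atTop (nhds (1 + β)) :=
      (tendsto_const_nhds.add hb)
    apply this.congr'
    filter_upwards [eventually_ge_atTop 1] with m hm
    have hm0 : (m : ℝ) ≠ 0 := by positivity
    simp only [hg]
    push_cast
    field_simp
  have h3 : Tendsto (fun m => (cnt simO 2 (g m) : ℝ) / m) atTop (nhds (β * (1 + β))) := by
    have := h1.mul h2
    apply this.congr'
    filter_upwards [eventually_ge_atTop 1] with m hm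
    have hg0 : ((g m : ℕ) : ℝ) ≠ 0 := by
      have : 1 ≤ g m := le_trans hm (by simp [hg])
      positivity
    field_simp
  -- from keyA : 2 * b (g m) / m + b m / m → 1
  have h4 : Tendsto (fun m => 2 * (cnt simO 2 (g m) : ℝ) / m + (cnt simO 2 m : ℝ) / m)
      atTop (nhds 1) := by
    have hz : Tendsto
        (fun m => 2 * (cnt simO 2 (g m) : ℝ) / m + (cnt simO 2 m : ℝ) / m - 1)
        atTop (nhds 0) := by
      apply squeeze_zero_norm' ?_ (tendsto_const_div_atTop_nhds_zero_nat 4)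
      filter_upwards [eventually_ge_atTop 1] with m hm
      obtain ⟨e, he, hid⟩ := keyA m hm
      have hm0 : (0 : ℝ) < (m : ℝ) := by exact_mod_cast hm
      have hcast : 2 * (cnt simO 2 (g m) : ℝ) + (cnt simO 2 m : ℝ) + e = m + 4 := by
        exact_mod_cast hid
      have he' : (e : ℝ) ≤ 1 := by exact_mod_cast he
      have he0 : (0 : ℝ) ≤ e := by positivity
      have key : 2 * (cnt simO 2 (g m) : ℝ) / m + (cnt simO 2 m : ℝ) / m - 1
          = (4 - e) / m := by
        field_simp
        linarith
      rw [key, Real.norm_eq_abs, abs_of_nonneg (div_nonneg (by linarith) hm0.le)]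
      gcongr
      linarith
    have := hz.add_const 1
    simpa using this
  have h5 : Tendsto (fun m => 2 * (cnt simO 2 (g m) : ℝ) / m + (cnt simO 2 m : ℝ) / m)
      atTop (nhds (2 * (β * (1 + β)) + β)) := by
    have := (h3.const_mul 2).add hb
    simpa [mul_div_assoc] using this
  have huniq : 2 * (β * (1 + β)) + β = 1 := tendsto_nhds_unique h5 h4
  nlinarith [huniq]

lemma no_rat_root (q : ℚ) (h : 2 * (q : ℝ) ^ 2 + 3 * (q : ℝ) - 1 = 0) : False := by
  have hq : 2 * q ^ 2 + 3 * q - 1 = 0 := by exact_mod_cast h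
  have h17 : ((4 * q + 3 : ℚ) : ℝ) ^ 2 = 17 := by
    push_cast
    nlinarith [hq]
  have hirr : Irrational (Real.sqrt 17) := by
    simpa using Nat.Prime.irrational_sqrt (p := 17) (by norm_num)
  have habs := Real.sqrt_sq_eq_abs ((4 * q + 3 : ℚ) : ℝ)
  rw [h17] at habs
  exact hirr ⟨|4 * q + 3|, by rw [habs, Rat.cast_abs]⟩

lemma cnt_add_Ioc (f : ℕ → ℕ) (a M s : ℕ) :
    cnt f a (M + s) = cnt f a M + ((Finset.Ioc M (M + s)).filter (fun i => f i = a)).card := by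
  have hsplit : Finset.Icc 1 (M + s) = Finset.Icc 1 M ∪ Finset.Ioc M (M + s) := by
    ext i
    simp only [Finset.mem_Icc, Finset.mem_union, Finset.mem_Ioc]
    omega
  have hdisj : Disjoint ((Finset.Icc 1 M).filter (fun i => f i = a))
      ((Finset.Ioc M (M + s)).filter (fun i => f i = a)) := by
    apply Finset.disjoint_filter_filter
    rw [Finset.disjoint_left]
    intro i hi hi'
    simp only [Finset.mem_Icc] at hi
    simp only [Finset.mem_Ioc] at hi'
    omega
  unfold cnt
  rw [hsplit, Finset.filter_union, Finset.card_union_of_disjoint hdisj]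

lemma periodic_cnt_rat (f : ℕ → ℕ) (a P N : ℕ) (hP : 1 ≤ P)
    (hper : ∀ n, N ≤ n → f (n + P) = f n) (L : ℝ)
    (hL : Tendsto (fun m => (cnt f a m : ℝ) / m) atTop (nhds L)) :
    ∃ q : ℚ, (q : ℝ) = L := by
  set c := ((Finset.Ioc N (N + P)).filter (fun i => f i = a)).card with hc
  have hshift : ∀ k i, N ≤ i → f (i + k * P) = f i := by
    intro k
    induction k with
    | zero => simp
    | succ k ih =>
      intro i hi
      have : i + (k + 1) * P = (i + k * P) + P := by ring
      rw [this, hper _ (by omega), ih i hi]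
  have hIoc : ∀ k, ((Finset.Ioc (N + k * P) (N + k * P + P)).filter (fun i => f i = a)).card
      = c := by
    intro k
    rw [hc]
    refine (Finset.card_bij (fun i _ => i + k * P) ?_ ?_ ?_).symm
    · intro i hi
      simp only [Finset.mem_filter, Finset.mem_Ioc] at hi ⊢
      refine ⟨by omega, ?_⟩
      rw [hshift k i (by omega)]
      exact hi.2
    · intro i hi j hj hij
      omega
    · intro j hj
      simp only [Finset.mem_filter, Finset.mem_Ioc] at hj
      refine ⟨j - k * P, ?_, by omega⟩
      simp only [Finset.mem_filter, Finset.mem_Ioc]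
      refine ⟨⟨by omega, by omega⟩, ?_⟩
      rw [← hshift k (j - k * P) (by omega), show j - k * P + k * P = j from by omega]
      exact hj.2
  have hcnt : ∀ k, cnt f a (N + k * P) = cnt f a N + k * c := by
    intro k
    induction k with
    | zero => simp
    | succ k ih =>
      have : N + (k + 1) * P = (N + k * P) + P := by ring
      rw [this, cnt_add_Ioc, ih, hIoc k]
      ring
  -- the subsequence limit
  have hseq : Tendsto (fun k => N + k * P) atTop atTop := by
    apply tendsto_atTop_mono (fun k => ?_) tendsto_id
    calc (k : ℕ) = k * 1 := by ring
    _ ≤ k * P := Nat.mul_le_mul_left k hP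
    _ ≤ N + k * P := by omega
  have hcomp : Tendsto (fun k : ℕ => ((cnt f a N : ℝ) + k * c) / ((N : ℝ) + k * P)) atTop
      (nhds L) := by
    have h' := hL.comp hseq
    have heq : ((fun m => (cnt f a m : ℝ) / m) ∘ fun k => N + k * P)
        = fun k : ℕ => ((cnt f a N : ℝ) + k * c) / ((N : ℝ) + k * P) := by
      funext k
      simp only [Function.comp_apply, hcnt k]
      push_cast
      ring_nf
    rw [heq] at h'
    exact h' 
  have hP0 : (0 : ℝ) < P := by exact_mod_cast hP
  have hlim : Tendsto (fun k : ℕ => ((cnt f a N : ℝ) + k * c) / ((N : ℝ) + k * P)) atTop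
      (nhds ((c : ℝ) / P)) := by
    have hnum : Tendsto (fun k : ℕ => (cnt f a N : ℝ) / k + c) atTop (nhds ((0 : ℝ) + c)) :=
      (tendsto_const_div_atTop_nhds_zero_nat _).add_const _
    have hden : Tendsto (fun k : ℕ => (N : ℝ) / k + P) atTop (nhds ((0 : ℝ) + P)) :=
      (tendsto_const_div_atTop_nhds_zero_nat _).add_const _
    have hdiv := hnum.div hden (by simpa using hP0.ne')
    simp only [zero_add] at hdiv
    have heq : ((fun k : ℕ => (cnt f a N : ℝ) / k + c) / fun k : ℕ => (N : ℝ) / k + P)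
        =ᶠ[atTop] fun k : ℕ => ((cnt f a N : ℝ) + k * c) / ((N : ℝ) + k * P) := by
      filter_upwards [eventually_ge_atTop 1] with k hk
      have hk0 : (k : ℝ) ≠ 0 := by positivity
      simp only [Pi.div_apply]
      field_simp
    exact Filter.Tendsto.congr' heq hdiv
  exact ⟨(c : ℚ) / P, by push_cast; exact (tendsto_nhds_unique hlim hcomp)⟩


/-- if the density of 1's in the simultaneously constructed
directing sequence T exists, then neither T nor O_T is eventually periodic. -/
theorem stmt19 (dT : ℝ)
    (hdT : Filter.Tendsto (freqOnes simT) Filter.atTop (nhds dT)) :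
    (¬ ∃ P N : ℕ, 1 ≤ P ∧ ∀ n, N ≤ n → simT (n + P) = simT n) ∧
    (¬ ∃ P N : ℕ, 1 ≤ P ∧ ∀ n, N ≤ n → simO (n + P) = simO n) := by
  have hdT' : Tendsto (fun m => (cnt simT 1 m : ℝ) / m) atTop (nhds dT) := hdT
  have hquad := beta_quadratic dT hdT'
  have hb := tendsto_b dT hdT'
  constructor
  · rintro ⟨P, N, hP, hper⟩
    obtain ⟨q, hq⟩ := periodic_cnt_rat simT 1 P N hP hper dT hdT'
    apply no_rat_root (2 * q - 1)
    have hcast : ((2 * q - 1 : ℚ) : ℝ) = 2 * dT - 1 := by push_cast [hq]; ring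
    rw [hcast]
    exact hquad
  · rintro ⟨P, N, hP, hper⟩
    obtain ⟨q, hq⟩ := periodic_cnt_rat simO 2 P N hP hper (2 * dT - 1) hb
    exact no_rat_root q (by rw [hq]; exact hquad)
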